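/- Let n ≥ 2 and let A be a real n×n singular irreducible M-matrix. For every nonzero pattern S_L ⊆ {(i,j) : 1 ≤ j ≤ i ≤ n} that contains all diagonal pairs (i,i) and does not contain (n,n−1), there exists a unique lower triangular matrix L_G such that (L_G)_{ij} = 0 for all (i,j) ∉ S_L and (L_G A)_{ij} = δ_{ij} for all (i,j) ∈ S_L. -/

import Mathlib

open Matrix

/-- The spectral radius of a real matrix: the maximum modulus of its complex
eigenvalues (supremum of moduli of elements of the complex spectrum). -/
noncomputable def specRad {n : ℕ} (B : Matrix (Fin n) (Fin n) ℝ) : ℝ :=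
  sSup ((fun z : ℂ => ‖z‖) '' spectrum ℂ (B.map Complex.ofReal))

/-- A real square matrix is a Z-matrix if its off-diagonal entries are nonpositive. -/
def IsZMatrix {n : ℕ} (A : Matrix (Fin n) (Fin n) ℝ) : Prop :=
  ∀ i j, i ≠ j → A i j ≤ 0

/-- A Z-matrix `A` is a nonsingular M-matrix if `A = s • 1 - B` with `B`
entrywise nonnegative and `s > ρ(B)`. -/
def IsNonsingularMMatrix {n : ℕ} (A : Matrix (Fin n) (Fin n) ℝ) : Prop :=
  IsZMatrix A ∧ ∃ (s : ℝ) (B : Matrix (Fin n) (Fin n) ℝ),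
    (∀ i j, 0 ≤ B i j) ∧ specRad B < s ∧ A = s • (1 : Matrix (Fin n) (Fin n) ℝ) - B

/-- A Z-matrix `A` is a singular M-matrix if `A = ρ(B) • 1 - B` with `B`
entrywise nonnegative. -/
def IsSingularMMatrix {n : ℕ} (A : Matrix (Fin n) (Fin n) ℝ) : Prop :=
  IsZMatrix A ∧ ∃ B : Matrix (Fin n) (Fin n) ℝ,
    (∀ i j, 0 ≤ B i j) ∧ A = specRad B • (1 : Matrix (Fin n) (Fin n) ℝ) - B

/-- A matrix is irreducible if its directed graph (edge `i → j` iff `A i j ≠ 0`)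
is strongly connected. -/
def IsIrreducibleMatrix {n : ℕ} (A : Matrix (Fin n) (Fin n) ℝ) : Prop :=
  ∀ i j : Fin n, Relation.ReflTransGen (fun a b : Fin n => A a b ≠ 0) i j

/-- Lower triangular real matrix. -/
def IsLowerTri {n : ℕ} (L : Matrix (Fin n) (Fin n) ℝ) : Prop :=
  ∀ i j : Fin n, i < j → L i j = 0

/-- Upper triangular real matrix. -/
def IsUpperTri {n : ℕ} (U : Matrix (Fin n) (Fin n) ℝ) : Prop :=
  ∀ i j : Fin n, j < i → U i j = 0

/-- `L` is an FSAI lower triangular factor of `A` for the pattern `S`: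
`L` is lower triangular, vanishes off the pattern, and `(L * A) i j = δ i j`
on the pattern. -/
def IsFSAILowerFactor {n : ℕ} (A L : Matrix (Fin n) (Fin n) ℝ)
    (S : Set (Fin n × Fin n)) : Prop :=
  IsLowerTri L ∧ (∀ p : Fin n × Fin n, p ∉ S → L p.1 p.2 = 0) ∧
    ∀ p : Fin n × Fin n, p ∈ S → (L * A) p.1 p.2 = if p.1 = p.2 then 1 else 0

/-- `U` is an FSAI upper triangular factor of `A` for the pattern `S`:
`U` is upper triangular, vanishes off the pattern, and `(A * U) i j = δ i j`
on the pattern. -/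
def IsFSAIUpperFactor {n : ℕ} (A U : Matrix (Fin n) (Fin n) ℝ)
    (S : Set (Fin n × Fin n)) : Prop :=
  IsUpperTri U ∧ (∀ p : Fin n × Fin n, p ∉ S → U p.1 p.2 = 0) ∧
    ∀ p : Fin n × Fin n, p ∈ S → (A * U) p.1 p.2 = if p.1 = p.2 then 1 else 0

namespace FSAI
open Filter Topology
attribute [local instance] Matrix.linftyOpNormedRing Matrix.linftyOpNormedAlgebra

variable {n : ℕ}

lemma bddAbove_abs_spectrum (M : Matrix (Fin n) (Fin n) ℂ) :
    BddAbove ((fun z : ℂ => ‖z‖) '' spectrum ℂ M) :=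
  ((spectrum.isCompact M).image continuous_norm).bddAbove

lemma specRad_nonneg (hn : n ≠ 0) (B : Matrix (Fin n) (Fin n) ℝ) : 0 ≤ specRad B := by
  haveI : Nonempty (Fin n) := ⟨⟨0, Nat.pos_of_ne_zero hn⟩⟩
  obtain ⟨z, hz⟩ := spectrum.nonempty (B.map Complex.ofReal)
  refine le_trans (norm_nonneg z) ?_
  exact le_csSup (bddAbove_abs_spectrum _) ⟨z, hz, rfl⟩

lemma abs_le_specRad {B : Matrix (Fin n) (Fin n) ℝ} {z : ℂ}
    (hz : z ∈ spectrum ℂ (B.map Complex.ofReal)) : ‖z‖ ≤ specRad B :=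
  le_csSup (bddAbove_abs_spectrum _) ⟨z, hz, rfl⟩

lemma spectralRadius_le_specRad {B : Matrix (Fin n) (Fin n) ℝ} :
    spectralRadius ℂ (B.map Complex.ofReal) ≤ ENNReal.ofReal (specRad B) := by
  rw [spectralRadius]
  refine iSup₂_le fun z hz => ?_
  have h1 : ‖z‖ ≤ specRad B := abs_le_specRad hz
  have : (‖z‖₊ : ENNReal) = ENNReal.ofReal ‖z‖ := by
    exact (ofReal_norm z).symm
  rw [this]
  exact ENNReal.ofReal_le_ofReal h1

lemma pow_entry_nonneg {B : Matrix (Fin n) (Fin n) ℝ} (hB : ∀ i j, 0 ≤ B i j) :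
    ∀ (m : ℕ) i j, 0 ≤ (B ^ m) i j := by
  intro m
  induction m with
  | zero => intro i j; by_cases h : i = j <;> simp [h, pow_zero, Matrix.one_apply]
  | succ m ih =>
    intro i j
    rw [pow_succ, Matrix.mul_apply]
    exact Finset.sum_nonneg fun k _ => mul_nonneg (ih i k) (hB k j)

lemma map_pow_ofReal (B : Matrix (Fin n) (Fin n) ℝ) (m : ℕ) :
    (B.map Complex.ofReal) ^ m = (B ^ m).map Complex.ofReal := by
  induction m with
  | zero => simp
  | succ m ih =>
    rw [pow_succ, pow_succ, ih]
    ext i j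
    simp [Matrix.mul_apply, Matrix.map_apply]

lemma specRad_ge_of_subinvariant (hn : n ≠ 0) {B : Matrix (Fin n) (Fin n) ℝ}
    (hB : ∀ i j, 0 ≤ B i j) {u : Fin n → ℝ} (hu : ∀ i, 0 < u i) {s : ℝ} (hs : 0 < s)
    (hsu : ∀ i, s * u i ≤ (B *ᵥ u) i) : s ≤ specRad B := by
  haveI : Nonempty (Fin n) := ⟨⟨0, Nat.pos_of_ne_zero hn⟩⟩
  have hpow : ∀ (m : ℕ) i, s ^ m * u i ≤ ((B ^ m) *ᵥ u) i := by
    intro m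
    induction m with
    | zero => intro i; simp [Matrix.one_mulVec]
    | succ m ih =>
      intro i
      have h1 : (B ^ (m + 1)) *ᵥ u = B *ᵥ ((B ^ m) *ᵥ u) := by
        rw [Matrix.mulVec_mulVec, ← pow_succ']
      rw [h1, Matrix.mulVec]
      have h2 : ∑ j, B i j * (s ^ m * u j) ≤ ∑ j, B i j * ((B ^ m) *ᵥ u) j :=
        Finset.sum_le_sum fun j _ => mul_le_mul_of_nonneg_left (ih j) (hB i j)
      have h3 : s ^ m * ∑ j, B i j * u j = ∑ j, B i j * (s ^ m * u j) := by
        rw [Finset.mul_sum]; congr 1; ext j; ring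
      calc s ^ (m + 1) * u i = s ^ m * (s * u i) := by ring
        _ ≤ s ^ m * (B *ᵥ u) i :=
            mul_le_mul_of_nonneg_left (hsu i) (pow_nonneg hs.le m)
        _ = ∑ j, B i j * (s ^ m * u j) := by rw [Matrix.mulVec]; exact h3
        _ ≤ _ := h2
  obtain ⟨umax, hmaxmem, hmax⟩ : ∃ a, a ∈ Set.range u ∧ ∀ i, u i ≤ a := by
    obtain ⟨i0, hi0⟩ := Finset.exists_max_image Finset.univ u ⟨Classical.arbitrary _, Finset.mem_univ _⟩
    exact ⟨u i0, ⟨i0, rfl⟩, fun i => hi0.2 i (Finset.mem_univ i)⟩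
  obtain ⟨umin, hminmem, hmin⟩ : ∃ a, a ∈ Set.range u ∧ ∀ i, a ≤ u i := by
    obtain ⟨i0, hi0⟩ := Finset.exists_min_image Finset.univ u ⟨Classical.arbitrary _, Finset.mem_univ _⟩
    exact ⟨u i0, ⟨i0, rfl⟩, fun i => hi0.2 i (Finset.mem_univ i)⟩
  obtain ⟨imax, rfl⟩ := hmaxmem
  obtain ⟨imin, rfl⟩ := hminmem
  set c : ℝ := u imin / u imax with hc_def
  have hc : 0 < c := div_pos (hu imin) (hu imax)
  set Bc := B.map Complex.ofReal with hBc
  have hnorm : ∀ m : ℕ, c * s ^ m ≤ ‖Bc ^ m‖ := by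
    intro m
    have hrow : ∑ j, ‖(Bc ^ m) (Classical.arbitrary _) j‖ ≤ ‖Bc ^ m‖ := by
      rw [Matrix.linfty_opNorm_def]
      have h1 : (∑ j, ‖(Bc ^ m) (Classical.arbitrary _) j‖₊)
          ≤ Finset.univ.sup fun i => ∑ j, ‖(Bc ^ m) i j‖₊ :=
        Finset.le_sup (f := fun i => ∑ j, ‖(Bc ^ m) i j‖₊) (Finset.mem_univ _)
      calc ∑ j, ‖(Bc ^ m) (Classical.arbitrary _) j‖
          = ((∑ j, ‖(Bc ^ m) (Classical.arbitrary _) j‖₊ : NNReal) : ℝ) := by push_cast; rfl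
        _ ≤ _ := by exact_mod_cast h1
    set i0 := (Classical.arbitrary (Fin n))
    have hentry : ∀ j, ‖(Bc ^ m) i0 j‖ = (B ^ m) i0 j := by
      intro j
      rw [map_pow_ofReal]
      simp [Matrix.map_apply, abs_of_nonneg (pow_entry_nonneg hB m i0 j)]
    have h2 : ∑ j, ‖(Bc ^ m) i0 j‖ = ∑ j, (B ^ m) i0 j := by
      exact Finset.sum_congr rfl fun j _ => hentry j
    have h3 : s ^ m * u imin ≤ ∑ j, (B ^ m) i0 j * u imax := by
      calc s ^ m * u imin ≤ s ^ m * u i0 :=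
            mul_le_mul_of_nonneg_left (hmin i0) (pow_nonneg hs.le m)
        _ ≤ ((B ^ m) *ᵥ u) i0 := hpow m i0
        _ = ∑ j, (B ^ m) i0 j * u j := rfl
        _ ≤ ∑ j, (B ^ m) i0 j * u imax :=
            Finset.sum_le_sum fun j _ =>
              mul_le_mul_of_nonneg_left (hmax j) (pow_entry_nonneg hB m i0 j)
    have h4 : ∑ j, (B ^ m) i0 j * u imax = (∑ j, (B ^ m) i0 j) * u imax := by
      rw [← Finset.sum_mul]
    have h5 : c * s ^ m ≤ ∑ j, (B ^ m) i0 j := by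
      rw [hc_def, div_mul_eq_mul_div, div_le_iff₀ (hu imax)]
      calc u imin * s ^ m = s ^ m * u imin := by ring
        _ ≤ ∑ j, (B ^ m) i0 j * u imax := h3
        _ = (∑ j, (B ^ m) i0 j) * u imax := h4
    calc c * s ^ m ≤ ∑ j, (B ^ m) i0 j := h5
      _ = ∑ j, ‖(Bc ^ m) i0 j‖ := h2.symm
      _ ≤ ‖Bc ^ m‖ := hrow
  have hgel := spectrum.pow_norm_pow_one_div_tendsto_nhds_spectralRadius Bc
  have h1 : Tendsto (fun m : ℕ => c ^ (1 / (m : ℝ)) * s) atTop (𝓝 s) := by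
    have hcont := (Real.continuousAt_const_rpow (a := c) (ne_of_gt hc)).tendsto.comp
      tendsto_one_div_atTop_nhds_zero_nat
    have : Tendsto (fun m : ℕ => c ^ (1 / (m : ℝ))) atTop (𝓝 1) := by
      simpa [Function.comp_def, Real.rpow_zero] using hcont
    simpa using this.mul_const s
  have hlow : Tendsto (fun m : ℕ => ENNReal.ofReal (c ^ (1 / (m : ℝ)) * s)) atTop
      (𝓝 (ENNReal.ofReal s)) := (ENNReal.continuous_ofReal.tendsto s).comp h1
  have hle : ∀ᶠ m : ℕ in atTop, ENNReal.ofReal (c ^ (1 / (m : ℝ)) * s)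
      ≤ ENNReal.ofReal ((‖Bc ^ m‖ : ℝ) ^ (1 / (m : ℝ))) := by
    filter_upwards [eventually_ge_atTop 1] with m hm
    apply ENNReal.ofReal_le_ofReal
    have hm0 : (m : ℝ) ≠ 0 := by positivity
    have hmr : (0:ℝ) ≤ 1 / (m : ℝ) := by positivity
    have key : c ^ (1 / (m : ℝ)) * s = (c * s ^ m) ^ (1 / (m : ℝ)) := by
      rw [Real.mul_rpow hc.le (by positivity), ← Real.rpow_natCast s m,
        ← Real.rpow_mul hs.le]
      congr 2
      field_simp
      simp
    rw [key]
    exact Real.rpow_le_rpow (by positivity) (hnorm m) hmr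
  have hfin : ENNReal.ofReal s ≤ spectralRadius ℂ Bc :=
    le_of_tendsto_of_tendsto hlow hgel hle
  have h4 : ENNReal.ofReal s ≤ ENNReal.ofReal (specRad B) :=
    hfin.trans spectralRadius_le_specRad
  exact (ENNReal.ofReal_le_ofReal_iff (specRad_nonneg hn B)).mp h4


lemma pow_entry_nonneg' {B : Matrix (Fin n) (Fin n) ℝ} (hB : ∀ i j, 0 ≤ B i j) :
    ∀ (m : ℕ) i j, 0 ≤ (B ^ m) i j := by
  intro m
  induction m with
  | zero => intro i j; by_cases h : i = j <;> simp [h, pow_zero, Matrix.one_apply]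
  | succ m ih =>
    intro i j
    rw [pow_succ, Matrix.mul_apply]
    exact Finset.sum_nonneg fun k _ => mul_nonneg (ih i k) (hB k j)

lemma pow_pos_of_reach {B : Matrix (Fin n) (Fin n) ℝ} (hB : ∀ i j, 0 ≤ B i j) {i j : Fin n}
    (h : Relation.ReflTransGen (fun a b => B a b ≠ 0) i j) :
    ∃ m : ℕ, 0 < (B ^ m) i j := by
  induction h with
  | refl => exact ⟨0, by simp [Matrix.one_apply]⟩
  | @tail b c hab hbc ih =>
    obtain ⟨m, hm⟩ := ih
    refine ⟨m + 1, ?_⟩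
    rw [pow_succ, Matrix.mul_apply]
    have hpos : 0 < (B ^ m) i b * B b c :=
      mul_pos hm (lt_of_le_of_ne (hB b c) (Ne.symm hbc))
    exact Finset.sum_pos' (fun x _ => mul_nonneg (pow_entry_nonneg' hB m i x) (hB x c))
      ⟨b, Finset.mem_univ b, hpos⟩

lemma one_add_entry_nonneg {B : Matrix (Fin n) (Fin n) ℝ} (hB : ∀ i j, 0 ≤ B i j) :
    ∀ i j, 0 ≤ (1 + B) i j := by
  intro i j
  have : (1 + B) i j = (if i = j then (1:ℝ) else 0) + B i j := by
    simp [Matrix.add_apply, Matrix.one_apply]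
  rw [this]
  split_ifs <;> linarith [hB i j]

lemma mul_entry_mono {M M' N N' : Matrix (Fin n) (Fin n) ℝ}
    (hM : ∀ i j, 0 ≤ M i j) (hN : ∀ i j, 0 ≤ N i j)
    (hMM : ∀ i j, M i j ≤ M' i j) (hNN : ∀ i j, N i j ≤ N' i j) :
    ∀ i j, (M * N) i j ≤ (M' * N') i j := by
  intro i j
  rw [Matrix.mul_apply, Matrix.mul_apply]
  refine Finset.sum_le_sum fun k _ => ?_
  exact mul_le_mul (hMM i k) (hNN k j) (hN k j) (le_trans (hM i k) (hMM i k))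

lemma pow_le_one_add_pow {B : Matrix (Fin n) (Fin n) ℝ} (hB : ∀ i j, 0 ≤ B i j) :
    ∀ (m : ℕ) i j, (B ^ m) i j ≤ ((1 + B) ^ m) i j := by
  intro m
  induction m with
  | zero => intro i j; simp
  | succ m ih =>
    rw [pow_succ, pow_succ]
    exact mul_entry_mono (pow_entry_nonneg' hB m) hB ih
      (fun i j => by
        have : (1 + B) i j = (if i = j then (1:ℝ) else 0) + B i j := by
          simp [Matrix.add_apply, Matrix.one_apply]
        rw [this]
        by_cases h : i = j <;> simp [h])

lemma one_add_pow_mono {B : Matrix (Fin n) (Fin n) ℝ} (hB : ∀ i j, 0 ≤ B i j)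
    {m N : ℕ} (hmN : m ≤ N) :
    ∀ i j, ((1 + B) ^ m) i j ≤ ((1 + B) ^ N) i j := by
  induction N, hmN using Nat.le_induction with
  | base => intro i j; exact le_refl _
  | succ N hmN ih =>
    intro i j
    rw [pow_succ, mul_add, mul_one, Matrix.add_apply]
    have h1 : 0 ≤ ((1 + B) ^ N * B) i j := by
      rw [Matrix.mul_apply]
      exact Finset.sum_nonneg fun k _ =>
        mul_nonneg (pow_entry_nonneg' (one_add_entry_nonneg hB) N i k) (hB k j)
    linarith [ih i j]

lemma exists_N_pos_mulVec {B : Matrix (Fin n) (Fin n) ℝ} (hB : ∀ i j, 0 ≤ B i j)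
    (hirrB : ∀ i j : Fin n, Relation.ReflTransGen (fun a b => B a b ≠ 0) i j)
    {w : Fin n → ℝ} (hw : ∀ i, 0 ≤ w i) {j1 : Fin n} (hj1 : 0 < w j1) :
    ∃ N0 : ℕ, ∀ N ≥ N0, ∀ i, 0 < (((1 + B) ^ N) *ᵥ w) i := by
  choose m hm using fun i => pow_pos_of_reach hB (hirrB i j1)
  refine ⟨Finset.univ.sup m, fun N hN i => ?_⟩
  have hmi : m i ≤ N :=
    le_trans (Finset.le_sup (f := m) (Finset.mem_univ i)) hN
  have h1 : 0 < ((1 + B) ^ N) i j1 :=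
    lt_of_lt_of_le (lt_of_lt_of_le (hm i) (pow_le_one_add_pow hB (m i) i j1))
      (one_add_pow_mono hB hmi i j1)
  rw [Matrix.mulVec]
  exact Finset.sum_pos'
    (fun x _ => mul_nonneg (pow_entry_nonneg' (one_add_entry_nonneg hB) N i x) (hw x))
    ⟨j1, Finset.mem_univ j1, mul_pos h1 hj1⟩

lemma pf_no_subinvariant_with_zero (hn : n ≠ 0) {B : Matrix (Fin n) (Fin n) ℝ}
    (hB : ∀ i j, 0 ≤ B i j)
    (hirrB : ∀ i j : Fin n, Relation.ReflTransGen (fun a b => B a b ≠ 0) i j)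
    {w : Fin n → ℝ} (hw : ∀ i, 0 ≤ w i)
    (hge : ∀ i, specRad B * w i ≤ (B *ᵥ w) i)
    {j1 k : Fin n} (hj1 : 0 < w j1) (hk : w k = 0) : False := by
  haveI : Nonempty (Fin n) := ⟨⟨0, Nat.pos_of_ne_zero hn⟩⟩
  set ρ := specRad B with hρ
  have hρ0 : 0 ≤ ρ := specRad_nonneg hn B
  by_cases hcase : ∀ i, (B *ᵥ w) i = ρ * w i
  · -- equality case: propagate zeros
    have hzero : ∀ x : Fin n, Relation.ReflTransGen (fun a b => B a b ≠ 0) k x → w x = 0 := by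
      intro x hreach
      induction hreach with
      | refl => exact hk
      | @tail b c hab hbc ih =>
        have h0 : (B *ᵥ w) b = 0 := by rw [hcase b, ih, mul_zero]
        rw [Matrix.mulVec] at h0
        have hterm := (Finset.sum_eq_zero_iff_of_nonneg
          (fun x _ => mul_nonneg (hB b x) (hw x))).mp h0 c (Finset.mem_univ c)
        rcases mul_eq_zero.mp hterm with h | h
        · exact absurd h hbc
        · exact h
    exact absurd (hzero j1 (hirrB k j1)) (ne_of_gt hj1)
  · push_neg at hcase
    obtain ⟨i0, hi0⟩ := hcase
    set z : Fin n → ℝ := fun i => (B *ᵥ w) i - ρ * w i with hz_def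
    have hz : ∀ i, 0 ≤ z i := fun i => sub_nonneg.mpr (hge i)
    have hzi0 : 0 < z i0 := lt_of_le_of_ne (hz i0) (by
      intro h; exact hi0 (by simpa [hz_def, sub_eq_zero] using h.symm))
    obtain ⟨N1, hN1⟩ := exists_N_pos_mulVec hB hirrB hw hj1
    obtain ⟨N2, hN2⟩ := exists_N_pos_mulVec hB hirrB hz hzi0
    set N := max N1 N2
    set P := (1 + B) ^ N with hP
    set u := P *ᵥ w with hu_def
    set v := P *ᵥ z with hv_def
    have hupos : ∀ i, 0 < u i := hN1 N (le_max_left _ _)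
    have hvpos : ∀ i, 0 < v i := hN2 N (le_max_right _ _)
    have hcomm : B * P = P * B := by
      have : Commute B ((1 + B) ^ N) :=
        (Commute.add_right (Commute.one_right B) (Commute.refl B)).pow_right N
      exact this
    have hBw : B *ᵥ w = ρ • w + z := by
      funext i
      simp only [hz_def, Pi.add_apply, Pi.smul_apply, smul_eq_mul]
      ring
    have hBu : B *ᵥ u = ρ • u + v := by
      rw [hu_def, Matrix.mulVec_mulVec, hcomm, ← Matrix.mulVec_mulVec, hBw,
        Matrix.mulVec_add, Matrix.mulVec_smul]
    -- choose ε
    set ε := Finset.univ.inf' (Finset.univ_nonempty) (fun i => v i / u i) with hε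
    obtain ⟨iε, -, hiε⟩ := Finset.exists_mem_eq_inf' (Finset.univ_nonempty) (fun i => v i / u i)
    have hεpos : 0 < ε := by
      rw [hε, hiε]
      exact div_pos (hvpos iε) (hupos iε)
    have hsub : ∀ i, (ρ + ε) * u i ≤ (B *ᵥ u) i := by
      intro i
      have h1 : ε ≤ v i / u i := Finset.inf'_le _ (Finset.mem_univ i)
      have h2 : ε * u i ≤ v i := by
        rw [← div_mul_cancel₀ (v i) (ne_of_gt (hupos i))]
        exact mul_le_mul_of_nonneg_right h1 (le_of_lt (hupos i))
      have h3 : (B *ᵥ u) i = ρ * u i + v i := by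
        rw [hBu]; simp [Pi.add_apply]
      rw [h3]; nlinarith
    have := specRad_ge_of_subinvariant hn hB hupos (by linarith : (0:ℝ) < ρ + ε) hsub
    rw [← hρ] at this
    linarith

lemma sum_eq_sum_subtype (α : Set (Fin n)) [Fintype α] (g : Fin n → ℝ)
    (hg : ∀ x ∉ α, g x = 0) : ∑ x, g x = ∑ x : α, g ↑x := by
  classical
  rw [← Finset.sum_subtype (Finset.univ.filter (· ∈ α)) (by simp) g]
  exact (Finset.sum_filter_of_ne (fun x _ hx => by
    by_contra hmem
    exact hx (hg x hmem))).symm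

lemma submatrix_det_ne_zero (hn : n ≠ 0) {A B : Matrix (Fin n) (Fin n) ℝ}
    (hB : ∀ i j, 0 ≤ B i j)
    (hAB : A = specRad B • (1 : Matrix (Fin n) (Fin n) ℝ) - B)
    (hirrB : ∀ i j : Fin n, Relation.ReflTransGen (fun a b => B a b ≠ 0) i j)
    (α : Set (Fin n)) [Fintype α] {k : Fin n} (hk : k ∉ α) :
    (A.submatrix (Subtype.val : α → Fin n) Subtype.val).det ≠ 0 := by
  classical
  intro hdet
  obtain ⟨v, hv0, hv⟩ := Matrix.exists_mulVec_eq_zero_iff.mpr hdet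
  set ρ := specRad B with hρ
  have hρ0 : 0 ≤ ρ := specRad_nonneg hn B
  set w : Fin n → ℝ := fun x => if h : x ∈ α then |v ⟨x, h⟩| else 0 with hw_def
  have hwmem : ∀ (x : Fin n) (h : x ∈ α), w x = |v ⟨x, h⟩| := fun x h => dif_pos h
  have hwnot : ∀ x : Fin n, x ∉ α → w x = 0 := fun x h => dif_neg h
  have hw : ∀ i, 0 ≤ w i := by
    intro i
    by_cases h : i ∈ α
    · rw [hwmem i h]; exact abs_nonneg _
    · rw [hwnot i h]
  have hwk : w k = 0 := hwnot k hk
  obtain ⟨j0, hj0⟩ := Function.ne_iff.mp hv0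
  have hj1 : 0 < w ↑j0 := by
    rw [hwmem ↑j0 j0.2]
    simpa [abs_pos] using hj0
  -- the eigen-equation on α
  have heig : ∀ j : α, ∑ x : α, B ↑j ↑x * v x = ρ * v j := by
    intro j
    have h1 : ∑ x : α, A ↑j ↑x * v x = 0 := by
      have := congrFun hv j
      rw [Matrix.mulVec] at this
      simpa [Matrix.submatrix_apply, Finset.mul_sum, dotProduct] using this
    have h2 : ∀ x : α, A ↑j ↑x = ρ * (if j = x then 1 else 0) - B ↑j ↑x := by
      intro x
      rw [hAB]
      by_cases hjx : j = x
      · simp [Matrix.sub_apply, Matrix.smul_apply, Matrix.one_apply, hjx]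
      · have : (↑j : Fin n) ≠ ↑x := fun hc => hjx (Subtype.ext hc)
        simp [Matrix.sub_apply, Matrix.smul_apply, Matrix.one_apply, hjx, this]
    have h4 : ∑ x : α, (ρ * (if j = x then 1 else 0) - B ↑j ↑x) * v x
        = ρ * v j - ∑ x : α, B ↑j ↑x * v x := by
      have hterm : ∀ x : α, (ρ * (if j = x then 1 else 0) - B ↑j ↑x) * v x
          = ρ * ((if j = x then 1 else 0) * v x) - B ↑j ↑x * v x := fun x => by ring
      rw [Finset.sum_congr rfl fun x _ => hterm x, Finset.sum_sub_distrib, ← Finset.mul_sum]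
      congr 2
      simp [ite_mul, Finset.sum_ite_eq]
    have h5 : ∑ x : α, A ↑j ↑x * v x = ρ * v j - ∑ x : α, B ↑j ↑x * v x := by
      rw [← h4]
      exact Finset.sum_congr rfl fun x _ => by rw [h2 x]
    have h6 := h5.symm.trans h1
    linarith
  have hge : ∀ i, ρ * w i ≤ (B *ᵥ w) i := by
    intro i
    have hBw : (B *ᵥ w) i = ∑ x : α, B i ↑x * w ↑x := by
      rw [Matrix.mulVec, dotProduct]
      exact sum_eq_sum_subtype α (fun x => B i x * w x)
        (fun x hx => by show B i x * w x = 0; rw [hwnot x hx, mul_zero])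
    by_cases hi : i ∈ α
    · have h5 : ρ * w i = |ρ * v ⟨i, hi⟩| := by
        rw [hw_def]
        simp only []
        rw [dif_pos hi, abs_mul, abs_of_nonneg hρ0]
      rw [h5, hBw, ← heig ⟨i, hi⟩]
      calc |∑ x : α, B i ↑x * v x| ≤ ∑ x : α, |B i ↑x * v x| :=
            Finset.abs_sum_le_sum_abs _ _
        _ = ∑ x : α, B i ↑x * w ↑x := by
            refine Finset.sum_congr rfl fun x _ => ?_
            rw [abs_mul, abs_of_nonneg (hB i ↑x), hwmem ↑x x.2]
    · rw [hwnot i hi, mul_zero, hBw]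
      exact Finset.sum_nonneg fun x _ => mul_nonneg (hB i ↑x) (hw ↑x)
  exact pf_no_subinvariant_with_zero hn hB hirrB hw hge hj1 hwk

lemma row_exists_unique (A : Matrix (Fin n) (Fin n) ℝ) (α : Set (Fin n)) [Fintype α]
    (hdet : (A.submatrix (Subtype.val : α → Fin n) Subtype.val).det ≠ 0) (e : Fin n → ℝ) :
    ∃! r : Fin n → ℝ, (∀ j, j ∉ α → r j = 0) ∧ ∀ j ∈ α, ∑ x, r x * A x j = e j := by
  classical
  set N := A.submatrix (Subtype.val : α → Fin n) Subtype.val with hN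
  have hu : IsUnit Nᵀ.det := by
    rw [Matrix.det_transpose]
    exact isUnit_iff_ne_zero.mpr hdet
  have hkey : ∀ (r : Fin n → ℝ), (∀ j, j ∉ α → r j = 0) → ∀ j : α,
      ∑ x, r x * A x ↑j = (Nᵀ *ᵥ fun x : α => r ↑x) j := by
    intro r hr j
    rw [Matrix.mulVec, dotProduct]
    rw [sum_eq_sum_subtype α (fun x => r x * A x ↑j)
      (fun x hx => by show r x * A x ↑j = 0; rw [hr x hx, zero_mul])]
    refine Finset.sum_congr rfl fun x _ => ?_
    rw [Matrix.transpose_apply, hN, Matrix.submatrix_apply]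
    ring
  have hcancel : ∀ rv : α → ℝ, Nᵀ⁻¹ *ᵥ (Nᵀ *ᵥ rv) = rv := by
    intro rv
    rw [Matrix.mulVec_mulVec, Matrix.nonsing_inv_mul _ hu, Matrix.one_mulVec]
  set rv0 : α → ℝ := Nᵀ⁻¹ *ᵥ (fun j : α => e ↑j) with hrv0
  have hrv0eq : Nᵀ *ᵥ rv0 = fun j : α => e ↑j := by
    rw [hrv0, Matrix.mulVec_mulVec, Matrix.mul_nonsing_inv _ hu, Matrix.one_mulVec]
  refine ⟨fun x => if h : x ∈ α then rv0 ⟨x, h⟩ else 0, ⟨fun j hj => dif_neg hj, ?_⟩, ?_⟩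
  · intro j hj
    rw [hkey _ (fun x hx => dif_neg hx) ⟨j, hj⟩]
    have : (fun x : α => dite (↑x ∈ α) (fun h => rv0 ⟨↑x, h⟩) (fun _ => 0)) = rv0 := by
      funext x
      rw [dif_pos x.2]
    rw [this, hrv0eq]
  · rintro r ⟨hr0, hreq⟩
    have hNr : Nᵀ *ᵥ (fun x : α => r ↑x) = fun j : α => e ↑j := by
      funext j
      rw [← hkey r hr0 j]
      exact hreq ↑j j.2
    have hr_eq : (fun x : α => r ↑x) = rv0 := by
      rw [← hcancel (fun x : α => r ↑x), hNr, hrv0]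
    funext x
    by_cases hx : x ∈ α
    · rw [dif_pos hx]
      have := congrFun hr_eq ⟨x, hx⟩
      exact this
    · rw [dif_neg hx, hr0 x hx]

end FSAI

theorem fsai_lower_exists_unique (n : ℕ) (hn : 2 ≤ n)
    (A : Matrix (Fin n) (Fin n) ℝ)
    (hA : IsSingularMMatrix A) (hirr : IsIrreducibleMatrix A)
    (S : Set (Fin n × Fin n))
    (hS1 : S ⊆ {p : Fin n × Fin n | p.2 ≤ p.1})
    (hS2 : ∀ i : Fin n, (i, i) ∈ S)
    (hS3 : ((⟨n - 1, by omega⟩ : Fin n), (⟨n - 2, by omega⟩ : Fin n)) ∉ S) :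
    ∃! L : Matrix (Fin n) (Fin n) ℝ, IsFSAILowerFactor A L S := by
  classical
  obtain ⟨hZ, B, hB, hABdef⟩ := hA
  have hn0 : n ≠ 0 := by omega
  have hirrB : ∀ i j : Fin n, Relation.ReflTransGen (fun a b => B a b ≠ 0) i j := by
    intro i j
    have h := hirr i j
    induction h with
    | refl => exact Relation.ReflTransGen.refl
    | @tail b c hab hbc ih =>
      by_cases hbceq : b = c
      · exact hbceq ▸ ih
      · refine ih.tail ?_
        intro h0
        apply hbc
        rw [hABdef]
        simp [Matrix.sub_apply, Matrix.smul_apply, Matrix.one_apply, hbceq, h0]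
  set σ : Fin n → Set (Fin n) := fun i => {j | (i, j) ∈ S} with hσ
  have hkmiss : ∀ i : Fin n, ∃ k, k ∉ σ i := by
    intro i
    by_cases hi : i = (⟨n - 1, by omega⟩ : Fin n)
    · exact ⟨⟨n - 2, by omega⟩, by rw [hi]; exact hS3⟩
    · refine ⟨⟨n - 1, by omega⟩, fun hmem => hi ?_⟩
      have h1 : (⟨n - 1, by omega⟩ : Fin n) ≤ i := hS1 hmem
      have h2 : i ≤ (⟨n - 1, by omega⟩ : Fin n) := by
        rw [Fin.le_def]
        have := i.isLt
        simp only []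
        omega
      exact le_antisymm h2 h1
  have hrow : ∀ i : Fin n, ∃! r : Fin n → ℝ,
      (∀ j, j ∉ σ i → r j = 0) ∧
      ∀ j ∈ σ i, ∑ x, r x * A x j = (fun j => if i = j then (1:ℝ) else 0) j := by
    intro i
    letI : Fintype ↑(σ i) := Fintype.ofFinite _
    obtain ⟨k, hk⟩ := hkmiss i
    exact FSAI.row_exists_unique A (σ i)
      (FSAI.submatrix_det_ne_zero hn0 hB hABdef hirrB (σ i) hk) _
  set L : Matrix (Fin n) (Fin n) ℝ := fun i => (hrow i).exists.choose with hL_def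
  have hL : ∀ i : Fin n,
      (∀ j, j ∉ σ i → L i j = 0) ∧
      ∀ j ∈ σ i, ∑ x, L i x * A x j = (fun j => if i = j then (1:ℝ) else 0) j :=
    fun i => (hrow i).exists.choose_spec
  have hmem_iff : ∀ p : Fin n × Fin n, p.2 ∈ σ p.1 ↔ p ∈ S := by
    intro p
    rw [hσ]
    simp only [Set.mem_setOf_eq]
  refine ⟨L, ⟨?_, ?_, ?_⟩, ?_⟩
  · intro i j hij
    refine (hL i).1 j fun hmem => ?_
    have : j ≤ i := hS1 hmem
    exact absurd hij (not_lt.mpr this)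
  · intro p hp
    exact (hL p.1).1 p.2 fun hmem => hp ((hmem_iff p).mp hmem)
  · intro p hp
    rw [Matrix.mul_apply]
    exact (hL p.1).2 p.2 ((hmem_iff p).mpr hp)
  · rintro L' ⟨hlow', hoff', hprod'⟩
    funext i
    have hP' : (∀ j, j ∉ σ i → L' i j = 0) ∧
        ∀ j ∈ σ i, ∑ x, L' i x * A x j = (fun j => if i = j then (1:ℝ) else 0) j := by
      constructor
      · intro j hj
        exact hoff' (i, j) fun hmem => hj ((hmem_iff (i, j)).mpr hmem)
      · intro j hj
        have := hprod' (i, j) ((hmem_iff (i, j)).mp hj)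
        rw [Matrix.mul_apply] at this
        exact this
    obtain ⟨r, hr, hru⟩ := hrow i
    have h1 := hru (L' i) hP'
    have h2 := hru (L i) (hL i)
    rw [h1, h2]
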